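/- Let (a,b,c) be elements of an algebra with q-commutation relations ca = q²ac, ab = q²ba, and bc = cb, with a+c invertible. Define a' = (a+c)⁻¹cb, b' = a+c, c' = (a+c)⁻¹ab. Then: (1) a' = bc(a+c)⁻¹ and c' = ba(a+c)⁻¹; (2) the new triple satisfies the mirrored relations b'c' = q²c'b', c'a' = q²a'c', and a'b' = b'a'; (3) the map φ: (a,b,c) ↦ (a',b',c') is an involution, i.e. applying the analogous transformation to (a',b',c') recovers (a,b,c). -/
import Mathlib


/-- The quantum change of Lusztig parametrization between the reduced words
`s₂s₁s₂` and `s₁s₂s₁`: properties of `a' = (a+c)⁻¹cb`, `b' = a+c`,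
`c' = (a+c)⁻¹ab`, including that the transformation is an involution. -/
theorem stmt3 {K R : Type*} [Field K] [Ring R] [Algebra K R]
    (q : K) (hq : q ≠ 0) (a b c e binv : R)
    (hca : c * a = q ^ 2 • (a * c))
    (hab : a * b = q ^ 2 • (b * a))
    (hbc : b * c = c * b)
    (he1 : e * (a + c) = 1) (he2 : (a + c) * e = 1)
    (hb1 : binv * b = 1) (hb2 : b * binv = 1) :
    let a' := e * c * b
    let b' := a + c
    let c' := e * a * b
    -- (1) the two expressions for a' and c' agree
    (a' = b * c * e ∧ c' = b * a * e) ∧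
    -- (2) the mirrored q-commutation relations
    (b' * c' = q ^ 2 • (c' * b') ∧ c' * a' = q ^ 2 • (a' * c') ∧
      a' * b' = b' * a') ∧
    -- (3) the map is an involution: applying the analogous transformation
    -- to (a',b',c') recovers (a,b,c)
    (a' + c' = b ∧ b' * c' * binv = a ∧ b' * a' * binv = c) := by
  intro a' b' c'
  have hsm : ∀ x : R, q ^ 2 • x = algebraMap K R (q ^ 2) * x :=
    fun x => Algebra.smul_def _ _
  set Q : R := algebraMap K R (q ^ 2) with hQdef
  have hcm : ∀ x y : R, x * (Q * y) = Q * (x * y) := fun x y => by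
    rw [← mul_assoc, ← Algebra.commutes (q ^ 2) x, mul_assoc]
  have hca' : c * a = Q * (a * c) := by rw [hca, hsm]
  have hab' : a * b = Q * (b * a) := by rw [hab, hsm]
  have L1 : a * (b * c) = Q * (b * (a * c)) := by
    rw [← mul_assoc a b c, hab', mul_assoc, mul_assoc]
  have L2 : c * (b * a) = a * (b * c) := by
    calc c * (b * a) = (c * b) * a := (mul_assoc c b a).symm
      _ = (b * c) * a := by rw [hbc]
      _ = b * (c * a) := mul_assoc _ _ _
      _ = b * (Q * (a * c)) := by rw [hca']
      _ = Q * (b * (a * c)) := hcm _ _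
      _ = a * (b * c) := L1.symm
  have P1 : (b * c) * a = a * (b * c) := by
    calc (b * c) * a = b * (c * a) := mul_assoc _ _ _
      _ = b * (Q * (a * c)) := by rw [hca']
      _ = Q * (b * (a * c)) := hcm _ _
      _ = a * (b * c) := L1.symm
  have H2 : (b * c) * (a + c) = (a + c) * (b * c) := by
    rw [mul_add, add_mul, P1]
    congr 1
    calc (b * c) * c = (c * b) * c := by rw [hbc]
      _ = c * (b * c) := mul_assoc _ _ _
  have H3 : (a + c) * (a * b) = Q * ((a * b) * (a + c)) := by
    have p3 : a * (a * b) = Q * ((a * b) * a) := by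
      calc a * (a * b) = a * (Q * (b * a)) := by rw [hab']
        _ = Q * (a * (b * a)) := hcm _ _
        _ = Q * ((a * b) * a) := by rw [mul_assoc a b a]
    have p4 : c * (a * b) = Q * ((a * b) * c) := by
      calc c * (a * b) = (c * a) * b := (mul_assoc _ _ _).symm
        _ = (Q * (a * c)) * b := by rw [hca']
        _ = Q * ((a * c) * b) := mul_assoc _ _ _
        _ = Q * (a * (c * b)) := by rw [mul_assoc a c b]
        _ = Q * (a * (b * c)) := by rw [hbc]
        _ = Q * ((a * b) * c) := by rw [mul_assoc a b c]
    rw [add_mul, mul_add (a * b) a c, mul_add Q, p3, p4]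
  have H6 : (a * b) * (a + c) = (a + c) * (b * a) := by
    rw [mul_add, add_mul, mul_assoc a b a, mul_assoc a b c, L2]
  have H7 : (a * b) * (c * b) = (c * b) * (a * b) := by
    have lhs : (a * b) * (c * b) = Q * (Q * (b * (b * (a * c)))) := by
      calc (a * b) * (c * b) = ((a * b) * c) * b := (mul_assoc _ c b).symm
        _ = (a * (b * c)) * b := by rw [mul_assoc a b c]
        _ = (Q * (b * (a * c))) * b := by rw [L1]
        _ = Q * ((b * (a * c)) * b) := mul_assoc _ _ _
        _ = Q * (b * ((a * c) * b)) := by rw [mul_assoc b (a * c) b]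
        _ = Q * (b * (a * (c * b))) := by rw [mul_assoc a c b]
        _ = Q * (b * (a * (b * c))) := by rw [← hbc]
        _ = Q * (b * (Q * (b * (a * c)))) := by rw [L1]
        _ = Q * (Q * (b * (b * (a * c)))) := by rw [hcm b]
    have rhs : (c * b) * (a * b) = Q * (Q * (b * (b * (a * c)))) := by
      calc (c * b) * (a * b) = ((c * b) * a) * b := (mul_assoc _ a b).symm
        _ = ((b * c) * a) * b := by rw [← hbc]
        _ = (b * (c * a)) * b := by rw [mul_assoc b c a]
        _ = (b * (Q * (a * c))) * b := by rw [hca']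
        _ = (Q * (b * (a * c))) * b := by rw [hcm b]
        _ = Q * ((b * (a * c)) * b) := mul_assoc _ _ _
        _ = Q * (b * ((a * c) * b)) := by rw [mul_assoc b (a * c) b]
        _ = Q * (b * (a * (c * b))) := by rw [mul_assoc a c b]
        _ = Q * (b * (a * (b * c))) := by rw [← hbc]
        _ = Q * (b * (Q * (b * (a * c)))) := by rw [L1]
        _ = Q * (Q * (b * (b * (a * c)))) := by rw [hcm b]
    rw [lhs, rhs]
  have key : ∀ x y : R, x * (a + c) = (a + c) * y → e * x = y * e := by
    intro x y h
    calc e * x = (e * x) * 1 := (mul_one _).symm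
      _ = (e * x) * ((a + c) * e) := by rw [he2]
      _ = e * ((x * (a + c)) * e) := by
          rw [mul_assoc e x, ← mul_assoc x (a + c) e]
      _ = e * (((a + c) * y) * e) := by rw [h]
      _ = (e * (a + c)) * (y * e) := by
          rw [mul_assoc (a + c) y e, ← mul_assoc e (a + c)]
      _ = y * e := by rw [he1, one_mul]
  have E1 : e * (b * c) = (b * c) * e := key _ _ H2
  have E3 : e * (a * b) = (b * a) * e := key _ _ H6
  have E2 : (a * b) * e = Q * (e * (a * b)) := by
    calc (a * b) * e = 1 * ((a * b) * e) := (one_mul _).symm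
      _ = (e * (a + c)) * ((a * b) * e) := by rw [he1]
      _ = e * (((a + c) * (a * b)) * e) := by
          rw [mul_assoc e (a + c), ← mul_assoc (a + c) (a * b) e]
      _ = e * ((Q * ((a * b) * (a + c))) * e) := by rw [H3]
      _ = e * (Q * (((a * b) * (a + c)) * e)) := by
          rw [mul_assoc Q ((a * b) * (a + c)) e]
      _ = Q * (e * (((a * b) * (a + c)) * e)) := hcm _ _
      _ = Q * (e * ((a * b) * ((a + c) * e))) := by
          rw [mul_assoc (a * b) (a + c) e]
      _ = Q * (e * (a * b)) := by rw [he2, mul_one]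
  have Ecb : (c * b) * e = e * (c * b) := by
    rw [← hbc, ← E1]
  have lgen : (a + c) * (e * a * b) = a * b := by
    rw [mul_assoc e a b, ← mul_assoc (a + c) e, he2, one_mul]
  have lgen2 : (a + c) * (e * c * b) = c * b := by
    rw [mul_assoc e c b, ← mul_assoc (a + c) e, he2, one_mul]
  refine ⟨⟨?_, ?_⟩, ⟨?_, ?_, ?_⟩, ?_, ?_, ?_⟩
  · show e * c * b = b * c * e
    rw [mul_assoc, ← hbc, E1]
  · show e * a * b = b * a * e
    rw [mul_assoc, E3]
  · show (a + c) * (e * a * b) = q ^ 2 • ((e * a * b) * (a + c))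
    rw [hsm, lgen]
    calc a * b = ((a * b) * e) * (a + c) := by
          rw [mul_assoc (a * b) e (a + c), he1, mul_one]
      _ = (Q * (e * (a * b))) * (a + c) := by rw [E2]
      _ = Q * ((e * (a * b)) * (a + c)) := mul_assoc _ _ _
      _ = Q * ((e * a * b) * (a + c)) := by rw [mul_assoc e a b]
  · show (e * a * b) * (e * c * b) = q ^ 2 • ((e * c * b) * (e * a * b))
    rw [hsm]
    have lhs : (e * a * b) * (e * c * b) = Q * (e * (e * ((a * b) * (c * b)))) := by
      calc (e * a * b) * (e * c * b)
          = (e * (a * b)) * (e * (c * b)) := by rw [mul_assoc e a b, mul_assoc e c b]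
        _ = e * ((a * b) * (e * (c * b))) := mul_assoc _ _ _
        _ = e * (((a * b) * e) * (c * b)) := by rw [← mul_assoc (a * b) e (c * b)]
        _ = e * ((Q * (e * (a * b))) * (c * b)) := by rw [E2]
        _ = e * (Q * ((e * (a * b)) * (c * b))) := by
            rw [mul_assoc Q (e * (a * b)) (c * b)]
        _ = Q * (e * ((e * (a * b)) * (c * b))) := hcm _ _
        _ = Q * (e * (e * ((a * b) * (c * b)))) := by rw [mul_assoc e (a * b) (c * b)]
    have rhs : (e * c * b) * (e * a * b) = e * (e * ((a * b) * (c * b))) := by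
      calc (e * c * b) * (e * a * b)
          = (e * (c * b)) * (e * (a * b)) := by rw [mul_assoc e a b, mul_assoc e c b]
        _ = e * ((c * b) * (e * (a * b))) := mul_assoc _ _ _
        _ = e * (((c * b) * e) * (a * b)) := by rw [← mul_assoc (c * b) e (a * b)]
        _ = e * ((e * (c * b)) * (a * b)) := by rw [Ecb]
        _ = e * (e * ((c * b) * (a * b))) := by rw [mul_assoc e (c * b) (a * b)]
        _ = e * (e * ((a * b) * (c * b))) := by rw [← H7]
    rw [lhs, rhs]
  · show (e * c * b) * (a + c) = (a + c) * (e * c * b)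
    rw [lgen2]
    calc (e * c * b) * (a + c) = (e * (c * b)) * (a + c) := by rw [mul_assoc e c b]
      _ = (e * (b * c)) * (a + c) := by rw [← hbc]
      _ = e * ((b * c) * (a + c)) := mul_assoc _ _ _
      _ = e * ((a + c) * (b * c)) := by rw [H2]
      _ = (e * (a + c)) * (b * c) := (mul_assoc _ _ _).symm
      _ = b * c := by rw [he1, one_mul]
      _ = c * b := hbc
  · show e * c * b + e * a * b = b
    rw [mul_assoc e c b, mul_assoc e a b, ← mul_add e, ← add_mul c a b,
      add_comm c a, ← mul_assoc e (a + c) b, he1, one_mul]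
  · show ((a + c) * (e * a * b)) * binv = a
    rw [lgen, mul_assoc, hb2, mul_one]
  · show ((a + c) * (e * c * b)) * binv = c
    rw [lgen2, mul_assoc, hb2, mul_one]
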